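/- Let $(p_j)$ be positive, non-increasing, summable frequencies, $\Delta\nu(x) = \#\{j : x/2 < p_j \le x\}$, $V(t) = \sum_j (e^{-tp_j} - e^{-2tp_j})$, and set $\bar v = \limsup_{t\to\infty} V(t)$, $\bar w = \limsup_{x\downarrow 0}\Delta\nu(x)$. Then $\bar v < \infty$ iff $\bar w < \infty$, and in that case $(\sqrt5 - 2)\,\bar w \le \bar v \le \bar w$. -/

import Mathlib

open Real Set Filter MeasureTheory Topology
open scoped ENNReal


noncomputable def grat : ℝ := (Real.sqrt 5 - 1) / 2

lemma sqrt5_gt : (2:ℝ) < Real.sqrt 5 := by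
  nlinarith [Real.sq_sqrt (by norm_num : (5:ℝ) ≥ 0), Real.sqrt_nonneg 5]

lemma sqrt5_lt : Real.sqrt 5 < 3 := by
  nlinarith [Real.sq_sqrt (by norm_num : (5:ℝ) ≥ 0), Real.sqrt_nonneg 5]

lemma grat_pos : 0 < grat := by unfold grat; nlinarith [sqrt5_gt]
lemma grat_lt_one : grat < 1 := by unfold grat; nlinarith [sqrt5_lt]

lemma key_quad {y : ℝ} (h1 : grat ^ 2 ≤ y) (h2 : y ≤ grat) :
    Real.sqrt 5 - 2 ≤ y - y ^ 2 := by
  have h5 : Real.sqrt 5 ^ 2 = 5 := Real.sq_sqrt (by norm_num)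
  unfold grat at *
  nlinarith [mul_nonneg (sub_nonneg.2 h1) (sub_nonneg.2 h2)]

noncomputable def cgold : ℝ := -(2 * Real.log grat)

lemma cgold_pos : 0 < cgold := by
  have := Real.log_neg grat_pos grat_lt_one
  unfold cgold; linarith

lemma exp_half_cgold : Real.exp (-(cgold / 2)) = grat := by
  have : -(cgold / 2) = Real.log grat := by unfold cgold; ring
  rw [this, Real.exp_log grat_pos]

lemma exp_cgold : Real.exp (-cgold) = grat ^ 2 := by
  have : -cgold = Real.log grat + Real.log grat := by unfold cgold; ring
  rw [this, Real.exp_add, Real.exp_log grat_pos]; ring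


section
variable {p : ℕ → ℝ}

lemma finite_gt (hsum : Summable p) {c : ℝ} (hc : 0 < c) : {j : ℕ | c < p j}.Finite := by
  have h2 : ∀ᶠ j in atTop, p j < c := hsum.tendsto_atTop_zero.eventually_lt_const hc
  obtain ⟨N, hN⟩ := eventually_atTop.1 h2
  apply Set.Finite.subset (Set.finite_lt_nat N)
  intro j hj
  simp only [Set.mem_setOf_eq] at *
  by_contra hle
  exact absurd (hN j (not_lt.1 hle)) (not_lt.2 hj.le)

lemma Sfin (hpos : ∀ j, 0 < p j) (hsum : Summable p) (x : ℝ) :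
    {j : ℕ | x / 2 < p j ∧ p j ≤ x}.Finite := by
  rcases le_or_gt x 0 with hx | hx
  · convert Set.finite_empty
    ext j; simp only [Set.mem_setOf_eq, Set.mem_empty_iff_false, iff_false]
    rintro ⟨-, h2⟩; exact absurd (hpos j) (not_lt.2 (h2.trans hx))
  · exact (finite_gt hsum (by linarith : (0:ℝ) < x / 2)).subset (fun j hj => hj.1)

lemma term_nonneg (hpos : ∀ j, 0 < p j) {t : ℝ} (ht : 0 < t) (j : ℕ) :
    0 ≤ Real.exp (-(t * p j)) - Real.exp (-(2 * t * p j)) := by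
  have : -(2 * t * p j) ≤ -(t * p j) := by nlinarith [hpos j]
  simpa using Real.exp_le_exp.2 this

lemma term_le (hpos : ∀ j, 0 < p j) {t : ℝ} (ht : 0 < t) (j : ℕ) :
    Real.exp (-(t * p j)) - Real.exp (-(2 * t * p j)) ≤ t * p j := by
  have ha : 0 < t * p j := mul_pos ht (hpos j)
  have h2 : Real.exp (-(2 * t * p j)) = Real.exp (-(t * p j)) ^ 2 := by
    rw [← Real.exp_nat_mul]; ring_nf
  have h3 : Real.exp (-(t * p j)) ≤ 1 := Real.exp_le_one_iff.2 (by linarith)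
  have h4 : 1 - t * p j ≤ Real.exp (-(t * p j)) := by
    have := Real.add_one_le_exp (-(t * p j)); linarith
  have h5 : 0 < Real.exp (-(t * p j)) := Real.exp_pos _
  nlinarith

lemma summable_term (hpos : ∀ j, 0 < p j) (hsum : Summable p) {t : ℝ} (ht : 0 < t) :
    Summable (fun j => Real.exp (-(t * p j)) - Real.exp (-(2 * t * p j))) :=
  Summable.of_nonneg_of_le (term_nonneg hpos ht) (term_le hpos ht) (hsum.mul_left t)

end


lemma Gcont (t : ℝ) : Continuous (fun x : ℝ => t * Real.exp (-(t * x))) := by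
  continuity

lemma Gmeas (t : ℝ) : Measurable (fun x : ℝ => ENNReal.ofReal (t * Real.exp (-(t * x)))) :=
  (Gcont t).measurable.ennreal_ofReal

lemma Gderiv (t : ℝ) (x : ℝ) :
    HasDerivAt (fun y : ℝ => -Real.exp (-(t * y))) (t * Real.exp (-(t * x))) x := by
  have h1 : HasDerivAt (fun y : ℝ => -(t * y)) (-t) x := by
    have := ((hasDerivAt_id' x).const_mul t).neg; rwa [mul_one] at this
  have h2 := (Real.hasDerivAt_exp (-(t * x))).comp x h1
  have h3 := h2.neg
  convert h3 using 1
  · rfl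
  · rfl
  · rfl
  · ring

lemma lint_Ioi {t : ℝ} (ht : 0 < t) (a : ℝ) :
    ∫⁻ x in Set.Ioi a, ENNReal.ofReal (t * Real.exp (-(t * x))) =
      ENNReal.ofReal (Real.exp (-(t * a))) := by
  have hint : IntegrableOn (fun x => t * Real.exp (-(t * x))) (Set.Ioi a) := by
    have := (exp_neg_integrableOn_Ioi a ht).const_mul t
    simp only [neg_mul] at this; exact this
  have htend : Tendsto (fun y => -Real.exp (-(t * y))) atTop (𝓝 0) := by
    rw [show (0:ℝ) = -0 by ring]
    apply Filter.Tendsto.neg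
    apply Real.tendsto_exp_atBot.comp
    apply tendsto_neg_atTop_atBot.comp
    exact tendsto_id.const_mul_atTop ht
  have hval := integral_Ioi_of_hasDerivAt_of_tendsto' (fun x _ => Gderiv t x) hint htend
  rw [← ofReal_integral_eq_lintegral_ofReal hint
    (Filter.Eventually.of_forall (fun x => by positivity)), hval]
  norm_num

lemma lint_Ico {t : ℝ} (ht : 0 < t) {a b : ℝ} (hab : a ≤ b) :
    ∫⁻ x in Set.Ico a b, ENNReal.ofReal (t * Real.exp (-(t * x))) =
      ENNReal.ofReal (Real.exp (-(t * a)) - Real.exp (-(t * b))) := by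
  rw [Measure.restrict_congr_set Ico_ae_eq_Ioc]
  have hint : IntegrableOn (fun x => t * Real.exp (-(t * x))) (Set.Ioc a b) :=
    (Gcont t).integrableOn_Ioc
  rw [← ofReal_integral_eq_lintegral_ofReal hint
    (Filter.Eventually.of_forall (fun x => by positivity))]
  congr 1
  rw [← intervalIntegral.integral_of_le hab]
  have := intervalIntegral.integral_eq_sub_of_hasDerivAt
    (f := fun y : ℝ => -Real.exp (-(t * y))) (f' := fun x => t * Real.exp (-(t * x)))
    (a := a) (b := b) (fun x _ => Gderiv t x) ((Gcont t).intervalIntegrable a b)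
  rw [this]; ring


section
variable {p : ℕ → ℝ}


lemma tsum_eq_lint (hpos : ∀ j, 0 < p j) (hsum : Summable p) {t : ℝ} (ht : 0 < t) :
    ENNReal.ofReal (∑' j : ℕ, (Real.exp (-(t * p j)) - Real.exp (-(2 * t * p j)))) =
      ∫⁻ x : ℝ, ∑' j : ℕ, (Set.Ico (p j) (2 * p j)).indicator
        (fun y => ENNReal.ofReal (t * Real.exp (-(t * y)))) x := by
  rw [ENNReal.ofReal_tsum_of_nonneg (term_nonneg hpos ht) (summable_term hpos hsum ht)]
  rw [lintegral_tsum (fun j => ((Gmeas t).indicator measurableSet_Ico).aemeasurable)]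
  congr 1
  funext j
  rw [lintegral_indicator measurableSet_Ico, lint_Ico ht (by nlinarith [hpos j] : p j ≤ 2 * p j)]
  congr 2
  ring_nf

lemma tsum_ind_eq (hpos : ∀ j, 0 < p j) (hsum : Summable p) (t : ℝ) (x : ℝ) :
    ∑' j : ℕ, (Set.Ico (p j) (2 * p j)).indicator
        (fun y => ENNReal.ofReal (t * Real.exp (-(t * y)))) x =
      (({j : ℕ | x / 2 < p j ∧ p j ≤ x}).ncard : ℝ≥0∞) *
        ENNReal.ofReal (t * Real.exp (-(t * x))) := by
  set c : ℝ≥0∞ := ENNReal.ofReal (t * Real.exp (-(t * x))) with hc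
  have hfin := Sfin hpos hsum x
  have hmem : ∀ j : ℕ, x ∈ Set.Ico (p j) (2 * p j) ↔ j ∈ {j : ℕ | x / 2 < p j ∧ p j ≤ x} := by
    intro j
    simp only [Set.mem_Ico, Set.mem_setOf_eq]
    constructor
    · rintro ⟨h1, h2⟩; exact ⟨by linarith, h1⟩
    · rintro ⟨h1, h2⟩; exact ⟨h2, by linarith⟩
  have heq : ∀ j : ℕ, (Set.Ico (p j) (2 * p j)).indicator
      (fun y => ENNReal.ofReal (t * Real.exp (-(t * y)))) x
      = if j ∈ hfin.toFinset then c else 0 := by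
    intro j
    rw [Set.indicator_apply]
    simp only [Set.Finite.mem_toFinset]
    exact if_congr (hmem j) rfl rfl
  calc ∑' j : ℕ, (Set.Ico (p j) (2 * p j)).indicator
        (fun y => ENNReal.ofReal (t * Real.exp (-(t * y)))) x
      = ∑' j : ℕ, (if j ∈ hfin.toFinset then c else 0) := by
        exact tsum_congr heq
    _ = ∑ j ∈ hfin.toFinset, (if j ∈ hfin.toFinset then c else 0) := by
        refine tsum_eq_sum ?_
        intro j hj
        simp [hj]
    _ = ∑ _j ∈ hfin.toFinset, c := by
        apply Finset.sum_congr rfl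
        intro j hj
        simp [hj]
    _ = (hfin.toFinset.card : ℝ≥0∞) * c := by
        rw [Finset.sum_const, nsmul_eq_mul]
    _ = (({j : ℕ | x / 2 < p j ∧ p j ≤ x}).ncard : ℝ≥0∞) * c := by
        rw [Set.ncard_eq_toFinset_card _ hfin]

end


section
variable {p : ℕ → ℝ}


lemma upper_est (hpos : ∀ j, 0 < p j) (hsum : Summable p)
    {t x0 W : ℝ} (ht : 0 < t) (hx0 : 0 < x0) (hW0 : 0 ≤ W)
    (hW : ∀ x : ℝ, 0 < x → x ≤ x0 → (({j : ℕ | x / 2 < p j ∧ p j ≤ x}).ncard : ℝ) ≤ W) :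
    ∑' j : ℕ, (Real.exp (-(t * p j)) - Real.exp (-(2 * t * p j))) ≤
      W + (({j : ℕ | x0 / 2 < p j}).ncard : ℝ) * Real.exp (-(t * x0)) := by
  set G : ℝ → ℝ≥0∞ := fun x => ENNReal.ofReal (t * Real.exp (-(t * x))) with hG
  set N0 : ℕ := ({j : ℕ | x0 / 2 < p j}).ncard with hN0
  have hTfin : {j : ℕ | x0 / 2 < p j}.Finite := finite_gt hsum (by linarith)
  -- pointwise bound
  have hptw : ∀ x : ℝ,
      (({j : ℕ | x / 2 < p j ∧ p j ≤ x}).ncard : ℝ≥0∞) * G x ≤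
        (Set.Ioc 0 x0).indicator (fun y => ENNReal.ofReal W * G y) x
        + (Set.Ioi x0).indicator (fun y => (N0 : ℝ≥0∞) * G y) x := by
    intro x
    rcases le_or_gt x 0 with hx | hx
    · have : {j : ℕ | x / 2 < p j ∧ p j ≤ x} = ∅ := by
        ext j; simp only [Set.mem_setOf_eq, Set.mem_empty_iff_false, iff_false]
        rintro ⟨-, h2⟩
        exact absurd (hpos j) (not_lt.2 (h2.trans hx))
      rw [this]
      simp
    rcases le_or_gt x x0 with hxx | hxx
    · have h1 : (({j : ℕ | x / 2 < p j ∧ p j ≤ x}).ncard : ℝ≥0∞) ≤ ENNReal.ofReal W := by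
        rw [← ENNReal.ofReal_natCast]
        exact ENNReal.ofReal_le_ofReal (hW x hx hxx)
      have hmem : x ∈ Set.Ioc 0 x0 := ⟨hx, hxx⟩
      have hnmem : x ∉ Set.Ioi x0 := by simp [not_lt.2 hxx]
      rw [Set.indicator_of_mem hmem, Set.indicator_of_notMem hnmem, add_zero]
      exact mul_le_mul_left h1 _
    · have hsub : {j : ℕ | x / 2 < p j ∧ p j ≤ x} ⊆ {j : ℕ | x0 / 2 < p j} := by
        intro j hj
        simp only [Set.mem_setOf_eq] at *
        have := hj.1; linarith
      have hcard : ({j : ℕ | x / 2 < p j ∧ p j ≤ x}).ncard ≤ N0 :=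
        Set.ncard_le_ncard hsub hTfin
      have h1 : (({j : ℕ | x / 2 < p j ∧ p j ≤ x}).ncard : ℝ≥0∞) ≤ (N0 : ℝ≥0∞) := by
        exact_mod_cast hcard
      have hmem : x ∈ Set.Ioi x0 := hxx
      have hnmem : x ∉ Set.Ioc 0 x0 := by simp [hxx, not_le.2 hxx]
      rw [Set.indicator_of_mem hmem, Set.indicator_of_notMem hnmem, zero_add]
      exact mul_le_mul_left h1 _
  -- integral bound
  have hmain : ENNReal.ofReal (∑' j : ℕ, (Real.exp (-(t * p j)) - Real.exp (-(2 * t * p j))))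
      ≤ ENNReal.ofReal (W + (N0 : ℝ) * Real.exp (-(t * x0))) := by
    rw [tsum_eq_lint hpos hsum ht]
    calc ∫⁻ x : ℝ, ∑' j : ℕ, (Set.Ico (p j) (2 * p j)).indicator
          (fun y => ENNReal.ofReal (t * Real.exp (-(t * y)))) x
        = ∫⁻ x : ℝ, (({j : ℕ | x / 2 < p j ∧ p j ≤ x}).ncard : ℝ≥0∞) * G x := by
          exact lintegral_congr (fun x => tsum_ind_eq hpos hsum t x)
      _ ≤ ∫⁻ x : ℝ, ((Set.Ioc 0 x0).indicator (fun y => ENNReal.ofReal W * G y) x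
            + (Set.Ioi x0).indicator (fun y => (N0 : ℝ≥0∞) * G y) x) :=
          lintegral_mono hptw
      _ = (∫⁻ x in Set.Ioc 0 x0, ENNReal.ofReal W * G x)
            + ∫⁻ x in Set.Ioi x0, (N0 : ℝ≥0∞) * G x := by
          rw [lintegral_add_left (Measurable.indicator (f := fun y => ENNReal.ofReal W * G y)
            ((Gmeas t).const_mul _) measurableSet_Ioc)]
          rw [lintegral_indicator measurableSet_Ioc, lintegral_indicator measurableSet_Ioi]
      _ = ENNReal.ofReal W * (∫⁻ x in Set.Ioc 0 x0, G x)
            + (N0 : ℝ≥0∞) * ∫⁻ x in Set.Ioi x0, G x := by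
          rw [lintegral_const_mul _ (Gmeas t), lintegral_const_mul _ (Gmeas t)]
      _ ≤ ENNReal.ofReal W * (∫⁻ x in Set.Ioi 0, G x)
            + (N0 : ℝ≥0∞) * ∫⁻ x in Set.Ioi x0, G x := by
          gcongr
          exact Set.Ioc_subset_Ioi_self
      _ = ENNReal.ofReal W * ENNReal.ofReal (Real.exp (-(t * 0)))
            + (N0 : ℝ≥0∞) * ENNReal.ofReal (Real.exp (-(t * x0))) := by
          rw [lint_Ioi ht 0, lint_Ioi ht x0]
      _ = ENNReal.ofReal (W + (N0 : ℝ) * Real.exp (-(t * x0))) := by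
          rw [mul_zero, neg_zero, Real.exp_zero, ENNReal.ofReal_one, mul_one]
          rw [ENNReal.ofReal_add hW0 (by positivity), ← ENNReal.ofReal_natCast N0,
            ← ENNReal.ofReal_mul (by positivity)]
  have hrhs : 0 ≤ W + (N0 : ℝ) * Real.exp (-(t * x0)) := by positivity
  exact (ENNReal.ofReal_le_ofReal_iff hrhs).1 hmain

end





section
variable {p : ℕ → ℝ}

lemma lower_est (hpos : ∀ j, 0 < p j) (hsum : Summable p) {x : ℝ} (hx : 0 < x) :
    (Real.sqrt 5 - 2) * (({j : ℕ | x / 2 < p j ∧ p j ≤ x}).ncard : ℝ) ≤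
      ∑' j : ℕ, (Real.exp (-(cgold / x * p j)) - Real.exp (-(2 * (cgold / x) * p j))) := by
  set t := cgold / x with htdef
  have ht : 0 < t := div_pos cgold_pos hx
  have hfin := Sfin hpos hsum x
  have hkey : ∀ j ∈ hfin.toFinset,
      Real.sqrt 5 - 2 ≤ Real.exp (-(t * p j)) - Real.exp (-(2 * t * p j)) := by
    intro j hj
    rw [Set.Finite.mem_toFinset] at hj
    obtain ⟨hj1, hj2⟩ := hj
    set y := Real.exp (-(t * p j)) with hy
    have hu1 : cgold / 2 < t * p j := by
      rw [htdef, div_mul_eq_mul_div, lt_div_iff₀ hx]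
      calc cgold / 2 * x = cgold * (x / 2) := by ring
      _ < cgold * p j := by exact mul_lt_mul_of_pos_left hj1 cgold_pos
      _ = cgold * p j := rfl
    have hu2 : t * p j ≤ cgold := by
      rw [htdef, div_mul_eq_mul_div, div_le_iff₀ hx]
      calc cgold * p j ≤ cgold * x := mul_le_mul_of_nonneg_left hj2 cgold_pos.le
      _ = cgold * x := rfl
    have hy1 : grat ^ 2 ≤ y := by
      rw [← exp_cgold, hy]; exact Real.exp_le_exp.2 (by linarith)
    have hy2 : y ≤ grat := by
      rw [← exp_half_cgold, hy]; exact Real.exp_le_exp.2 (by linarith)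
    have hsq : Real.exp (-(2 * t * p j)) = y ^ 2 := by
      rw [hy, ← Real.exp_nat_mul]; ring_nf
    rw [hsq]
    exact key_quad hy1 hy2
  calc (Real.sqrt 5 - 2) * (({j : ℕ | x / 2 < p j ∧ p j ≤ x}).ncard : ℝ)
      = ∑ _j ∈ hfin.toFinset, (Real.sqrt 5 - 2) := by
        rw [Finset.sum_const, Set.ncard_eq_toFinset_card _ hfin]
        ring
    _ ≤ ∑ j ∈ hfin.toFinset, (Real.exp (-(t * p j)) - Real.exp (-(2 * t * p j))) :=
        Finset.sum_le_sum hkey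
    _ ≤ ∑' j : ℕ, (Real.exp (-(t * p j)) - Real.exp (-(2 * t * p j))) :=
        Summable.sum_le_tsum _ (fun j _ => term_nonneg hpos ht j) (summable_term hpos hsum ht)

end


lemma limsup_comp_le {u : ℝ → EReal} {m : ℝ → ℝ} {l : Filter ℝ}
    (h : Tendsto m l atTop) : limsup (fun a => u (m a)) l ≤ limsup u atTop := by
  have h1 : limsup (fun a => u (m a)) l = limsup u (map m l) := by
    simp only [Filter.limsup, Filter.map_map]; rfl
  rw [h1]
  exact limsup_le_limsup_of_le h

set_option maxHeartbeats 1000000 in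
theorem stmt8 (p : ℕ → ℝ) (hpos : ∀ j, 0 < p j) (hmono : ∀ j, p (j + 1) ≤ p j)
    (hsum : Summable p)
    (V : ℝ → ℝ)
    (hV : ∀ t : ℝ, V t = ∑' j : ℕ, (Real.exp (-(t * p j)) - Real.exp (-(2 * t * p j))))
    (Δν : ℝ → ℝ) (hΔν : ∀ x : ℝ, Δν x = (({j : ℕ | x / 2 < p j ∧ p j ≤ x}).ncard : ℝ))
    (vbar wbar : EReal)
    (hvbar : vbar = Filter.limsup (fun t : ℝ => ((V t : ℝ) : EReal)) atTop)
    (hwbar : wbar = Filter.limsup (fun x : ℝ => ((Δν x : ℝ) : EReal))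
      (nhdsWithin (0 : ℝ) (Set.Ioi (0 : ℝ)))) :
    (vbar < ⊤ ↔ wbar < ⊤) ∧
    (wbar < ⊤ → ((Real.sqrt 5 - 2 : ℝ) : EReal) * wbar ≤ vbar ∧ vbar ≤ wbar) := by
  have hc : (0:ℝ) < Real.sqrt 5 - 2 := by linarith [sqrt5_gt]
  set l : Filter ℝ := nhdsWithin (0 : ℝ) (Set.Ioi (0 : ℝ)) with hl
  -- wbar nonneg
  have hw0 : (0 : EReal) ≤ wbar := by
    rw [hwbar]
    refine le_limsup_of_frequently_le (Eventually.frequently ?_)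
    refine Eventually.of_forall (fun x => ?_)
    rw [hΔν]
    exact_mod_cast EReal.coe_nonneg.2 (Nat.cast_nonneg _)
  -- pointwise lower bound
  have hVlow : ∀ x : ℝ, 0 < x → (Real.sqrt 5 - 2) * Δν x ≤ V (cgold / x) := by
    intro x hx
    rw [hΔν, hV]
    exact lower_est hpos hsum hx
  -- lower bound on limsup
  have hlow : ((Real.sqrt 5 - 2 : ℝ) : EReal) * wbar ≤ vbar := by
    have hmap : Tendsto (fun x : ℝ => cgold / x) l atTop := by
      simpa [div_eq_mul_inv] using tendsto_inv_nhdsGT_zero.const_mul_atTop cgold_pos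
    have hL1 : limsup (fun x : ℝ => ((V (cgold / x) : ℝ) : EReal)) l ≤ vbar := by
      rw [hvbar]
      exact limsup_comp_le (u := fun t : ℝ => ((V t : ℝ) : EReal)) (m := fun x : ℝ => cgold / x) hmap
    refine le_trans ?_ hL1
    refine (le_limsup_iff).2 (fun y hy => ?_)
    obtain ⟨r, hyr, hrw⟩ := EReal.lt_iff_exists_real_btwn.1 hy
    have hs : ((r / (Real.sqrt 5 - 2) : ℝ) : EReal) < wbar := by
      induction wbar with
      | bot =>
          exfalso
          have : ((Real.sqrt 5 - 2 : ℝ) : EReal) * ⊥ = ⊥ := by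
            rw [EReal.mul_comm]
            exact EReal.bot_mul_of_pos (by exact_mod_cast hc)
          rw [this] at hrw
          exact absurd hrw (by simp)
      | coe w =>
          have : ((Real.sqrt 5 - 2 : ℝ) : EReal) * (w : EReal) = ((( Real.sqrt 5 - 2) * w : ℝ) : EReal) := by
            rw [EReal.coe_mul]
          rw [this] at hrw
          have hrw' : r < (Real.sqrt 5 - 2) * w := EReal.coe_lt_coe_iff.1 hrw
          exact EReal.coe_lt_coe_iff.2 (by rw [div_lt_iff₀ hc]; linarith)
      | top => exact EReal.coe_lt_top _
    have hfr : ∃ᶠ x in l, ((r / (Real.sqrt 5 - 2) : ℝ) : EReal) < ((Δν x : ℝ) : EReal) := by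
      apply frequently_lt_of_lt_limsup
      · isBoundedDefault
      · rw [← hwbar]; exact hs
    have hev : ∀ᶠ x in l, x ∈ Set.Ioi (0:ℝ) := eventually_mem_nhdsWithin
    refine (hfr.and_eventually hev).mono ?_
    rintro x ⟨h1, hx0⟩
    have h2 : r / (Real.sqrt 5 - 2) < Δν x := EReal.coe_lt_coe_iff.1 h1
    have h3 : r < (Real.sqrt 5 - 2) * Δν x := by
      rw [div_lt_iff₀ hc] at h2; linarith
    have h4 := hVlow x hx0
    exact lt_of_lt_of_le hyr (EReal.coe_le_coe_iff.2 (by linarith))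
  -- upper bound
  have hup : wbar < ⊤ → vbar ≤ wbar := by
    intro hwlt
    have hwne : wbar ≠ ⊥ := ne_bot_of_le_ne_bot (by simp) hw0
    have hwE : ((wbar.toReal : ℝ) : EReal) = wbar := EReal.coe_toReal hwlt.ne hwne
    set w : ℝ := wbar.toReal with hwdef
    have hw0' : 0 ≤ w := by
      have := hw0; rw [← hwE] at this; exact_mod_cast this
    suffices hsuf : ∀ ε : ℝ, 0 < ε → vbar ≤ ((w + ε : ℝ) : EReal) by
      by_contra hvw
      rw [← hwE] at hvw
      have : ((w : ℝ) : EReal) < vbar := not_le.1 hvw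
      obtain ⟨r, h1, h2⟩ := EReal.lt_iff_exists_real_btwn.1 this
      have hrw : w < r := EReal.coe_lt_coe_iff.1 h1
      have := hsuf (r - w) (by linarith)
      rw [show w + (r - w) = r by ring] at this
      exact absurd h2 (not_lt.2 this)
    intro ε hε
    have hev : ∀ᶠ x in l, ((Δν x : ℝ) : EReal) < ((w + ε : ℝ) : EReal) := by
      apply eventually_lt_of_limsup_lt
      · rw [← hwbar, ← hwE]
        exact_mod_cast EReal.coe_lt_coe_iff.2 (by linarith : w < w + ε)
      · isBoundedDefault
    rw [hl, eventually_iff, mem_nhdsGT_iff_exists_Ioc_subset] at hev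
    obtain ⟨x0, hx0mem, hsub⟩ := hev
    have hx0 : 0 < x0 := hx0mem
    have hWcond : ∀ x : ℝ, 0 < x → x ≤ x0 →
        (({j : ℕ | x / 2 < p j ∧ p j ≤ x}).ncard : ℝ) ≤ w + ε := by
      intro x h1 h2
      have := hsub ⟨h1, h2⟩
      simp only [Set.mem_setOf_eq] at this
      have h3 : Δν x < w + ε := EReal.coe_lt_coe_iff.1 this
      rw [hΔν] at h3
      exact h3.le
    set N0 : ℝ := (({j : ℕ | x0 / 2 < p j}).ncard : ℝ) with hN0
    have hub : ∀ t : ℝ, 0 < t → V t ≤ (w + ε) + N0 * Real.exp (-(t * x0)) := by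
      intro t ht
      rw [hV]
      exact upper_est hpos hsum ht hx0 (by linarith) hWcond
    have hevt : ∀ᶠ t : ℝ in atTop,
        ((V t : ℝ) : EReal) ≤ (((w + ε) + N0 * Real.exp (-(t * x0)) : ℝ) : EReal) := by
      filter_upwards [eventually_gt_atTop (0:ℝ)] with t ht
      exact EReal.coe_le_coe_iff.2 (hub t ht)
    have htend : Tendsto (fun t : ℝ => (((w + ε) + N0 * Real.exp (-(t * x0)) : ℝ) : EReal))
        atTop (𝓝 ((w + ε : ℝ) : EReal)) := by
      rw [EReal.tendsto_coe]
      have h1 : Tendsto (fun t : ℝ => Real.exp (-(t * x0))) atTop (𝓝 0) := by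
        apply Real.tendsto_exp_atBot.comp
        exact tendsto_neg_atTop_atBot.comp (tendsto_id.atTop_mul_const hx0)
      have h2 := (h1.const_mul N0).const_add (w + ε)
      simpa using h2
    have hle : vbar ≤ ((w + ε : ℝ) : EReal) := by
      rw [hvbar]
      calc limsup (fun t : ℝ => ((V t : ℝ) : EReal)) atTop
          ≤ limsup (fun t : ℝ => (((w + ε) + N0 * Real.exp (-(t * x0)) : ℝ) : EReal)) atTop :=
            limsup_le_limsup hevt
        _ = ((w + ε : ℝ) : EReal) := htend.limsup_eq
    -- done for this ε, but we must show vbar ≤ w + ε which is hle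
    exact hle
  refine ⟨⟨?_, fun hw => lt_of_le_of_lt (hup hw) hw⟩, fun hw => ⟨hlow, hup hw⟩⟩
  intro hv
  by_contra hw
  have hwtop : wbar = ⊤ := by
    rcases lt_or_eq_of_le (le_top : wbar ≤ ⊤) with h | h
    · exact absurd h hw
    · exact h
  rw [hwtop, EReal.coe_mul_top_of_pos (by exact_mod_cast hc)] at hlow
  have : vbar = ⊤ := top_le_iff.1 hlow
  rw [this] at hv
  exact lt_irrefl _ hv
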